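/- There exist N equiangular lines in R^d with common angle arccos α (0 < α < 1) if and only if there exists an N-vertex graph G such that the matrix λI − A_G + (1/2)J is positive semidefinite and has rank at most d, where λ = (1−α)/(2α), A_G is the adjacency matrix of G, and J is the all-ones matrix. -/

import Mathlib

open Matrix SimpleGraph Finset
open scoped Classical RealInnerProductSpace

noncomputable section

/-- The adjacency matrix of a graph is Hermitian (real symmetric). -/
lemma adjHerm {V : Type} [Fintype V] [DecidableEq V] (G : SimpleGraph V) :
    (G.adjMatrix ℝ).IsHermitian := by
  have h := G.isSymm_adjMatrix (α := ℝ)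
  simpa [Matrix.IsHermitian, Matrix.conjTranspose_eq_transpose_of_trivial] using h

/-- The spectral radius (largest adjacency eigenvalue) `λ₁(G)` of a graph. -/
def specRad {V : Type} [Fintype V] [DecidableEq V] (G : SimpleGraph V) : ℝ :=
  ⨆ i, (adjHerm G).eigenvalues i

/-- The `j`-th largest adjacency eigenvalue of `G` (1-indexed, with multiplicity):
entry `card V - j` of the increasingly sorted list of eigenvalues. -/
def nthEig {V : Type} [Fintype V] [DecidableEq V] (G : SimpleGraph V) (j : ℕ) : ℝ :=
  (Multiset.sort (Finset.univ.val.map (adjHerm G).eigenvalues) (· ≤ ·)).getD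
    (Fintype.card V - j) 0

/-- The multiplicity of `μ` as an adjacency eigenvalue of `G`. -/
def eigMult {V : Type} [Fintype V] [DecidableEq V] (G : SimpleGraph V) (μ : ℝ) : ℕ :=
  Module.finrank ℝ (Module.End.eigenspace (Matrix.toLin' (G.adjMatrix ℝ)) μ)

/-- The ball of radius `r` around `v`: all vertices at graph distance at most `r` from `v`. -/
def ball {V : Type} (G : SimpleGraph V) (v : V) (r : ℕ) : Set V := {u | G.dist v u ≤ r}

lemma exists_factorization {N d : ℕ} {M : Matrix (Fin N) (Fin N) ℝ}
    (hM : M.PosSemidef) (hr : M.rank ≤ d) :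
    ∃ W : Matrix (Fin d) (Fin N) ℝ, M = Wᵀ * W := by
  have hH : M.IsHermitian := hM.1
  have hcard : Fintype.card {i // hH.eigenvalues i ≠ 0} ≤ Fintype.card (Fin d) := by
    rw [Fintype.card_fin]
    exact hH.rank_eq_card_non_zero_eigs ▸ hr
  obtain ⟨e⟩ := Function.Embedding.nonempty_of_card_le hcard
  refine ⟨Matrix.of fun k i =>
    if h : ∃ j : {i // hH.eigenvalues i ≠ 0}, e j = k then
      Real.sqrt (hH.eigenvalues h.choose) * hH.eigenvectorBasis h.choose i else 0, ?_⟩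
  have hW : ∀ (j : {i // hH.eigenvalues i ≠ 0}) (i : Fin N),
      (if h : ∃ j' : {i // hH.eigenvalues i ≠ 0}, e j' = e j then
        Real.sqrt (hH.eigenvalues h.choose) * hH.eigenvectorBasis h.choose i else 0)
      = Real.sqrt (hH.eigenvalues j) * hH.eigenvectorBasis j i := by
    intro j i
    have h : ∃ j' : {i // hH.eigenvalues i ≠ 0}, e j' = e j := ⟨j, rfl⟩
    have hch : h.choose = j := e.injective h.choose_spec
    rw [dif_pos h, hch]
  ext i i'
  have hsp : M i i' = ∑ k, hH.eigenvalues k *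
      (hH.eigenvectorBasis k i * hH.eigenvectorBasis k i') := by
    have h := congrFun (congrFun hH.spectral_theorem i) i'
    simpa [Matrix.mul_apply, Matrix.mul_diagonal, Matrix.star_apply, Matrix.diagonal_apply,
      Matrix.conjTranspose_apply, Function.comp, ite_mul, mul_ite, mul_zero, zero_mul,
      Finset.sum_ite_eq, Finset.sum_ite_eq', mul_comm, mul_assoc, mul_left_comm] using h
  rw [hsp, Matrix.mul_apply]
  simp only [Matrix.transpose_apply, Matrix.of_apply]
  rw [← Finset.sum_subset (Finset.subset_univ (Finset.univ.image e))
    (fun k _ hk => by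
      have h : ¬ ∃ j : {i // hH.eigenvalues i ≠ 0}, e j = k := by
        rintro ⟨j, hj⟩; exact hk (Finset.mem_image.mpr ⟨j, Finset.mem_univ _, hj⟩)
      rw [dif_neg h, zero_mul])]
  rw [Finset.sum_image (fun a _ b _ hab => e.injective hab)]
  have step1 : ∀ j : {i // hH.eigenvalues i ≠ 0},
      (Real.sqrt (hH.eigenvalues j) * hH.eigenvectorBasis j i) *
      (Real.sqrt (hH.eigenvalues j) * hH.eigenvectorBasis j i')
      = hH.eigenvalues j.val * (hH.eigenvectorBasis j.val i * hH.eigenvectorBasis j.val i') := by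
    intro j
    rw [mul_mul_mul_comm, Real.mul_self_sqrt (hM.eigenvalues_nonneg j.val)]
  simp only [hW, step1]
  rw [← Finset.sum_subtype (Finset.univ.filter (fun j => hH.eigenvalues j ≠ 0))
    (fun x => by simp)
    (fun j => hH.eigenvalues j * (hH.eigenvectorBasis j i * hH.eigenvectorBasis j i')),
    Finset.sum_filter_of_ne (fun x _ hx => by intro h0; apply hx; rw [h0, zero_mul])]

lemma inner_eq_sum {n : ℕ} (x y : EuclideanSpace ℝ (Fin n)) :
    ⟪x, y⟫ = ∑ k, x k * y k := by
  simp [PiLp.inner_apply, RCLike.inner_apply, conj_trivial]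
  exact Finset.sum_congr rfl fun _ _ => mul_comm _ _

/-- There exist `N` equiangular lines in `ℝ^d` with common angle `arccos α` iff there is an
`N`-vertex graph `G` with `λI - A_G + (1/2)J` positive semidefinite of rank at most `d`,
where `λ = (1-α)/(2α)` and `J` is the all-ones matrix. -/
theorem stmt6 (d N : ℕ) (α : ℝ) (hα : 0 < α) (hα1 : α < 1) (l : ℝ)
    (hl : l = (1 - α) / (2 * α)) :
    (∃ v : Fin N → EuclideanSpace ℝ (Fin d), (∀ i, ‖v i‖ = 1) ∧
        ∀ i j, i ≠ j → ⟪v i, v j⟫ = α ∨ ⟪v i, v j⟫ = -α) ↔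
      (∃ G : SimpleGraph (Fin N),
        (l • (1 : Matrix (Fin N) (Fin N) ℝ) - G.adjMatrix ℝ
            + (1 / 2 : ℝ) • (Matrix.of fun _ _ => (1 : ℝ))).PosSemidef ∧
        (l • (1 : Matrix (Fin N) (Fin N) ℝ) - G.adjMatrix ℝ
            + (1 / 2 : ℝ) • (Matrix.of fun _ _ => (1 : ℝ))).rank ≤ d) := by
  have hα' : α ≠ 0 := ne_of_gt hα
  constructor
  · rintro ⟨v, hv1, hv2⟩
    refine ⟨SimpleGraph.fromRel (fun i j => ⟪v i, v j⟫ = -α), ?_⟩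
    set W : Matrix (Fin d) (Fin N) ℝ :=
      Matrix.of (fun k i => Real.sqrt (1 / (2 * α)) * v i k) with hWdef
    have hc : (0:ℝ) ≤ 1 / (2 * α) := by positivity
    have hg : ∀ i j, (Wᵀ * W) i j = (1 / (2 * α)) * ⟪v i, v j⟫ := by
      intro i j
      rw [Matrix.mul_apply, inner_eq_sum, Finset.mul_sum]
      refine Finset.sum_congr rfl fun k _ => ?_
      simp only [Matrix.transpose_apply, hWdef, Matrix.of_apply]
      rw [mul_mul_mul_comm, Real.mul_self_sqrt hc]
    have key : (l • (1 : Matrix (Fin N) (Fin N) ℝ)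
        - (SimpleGraph.fromRel (fun i j => ⟪v i, v j⟫ = -α)).adjMatrix ℝ
        + (1 / 2 : ℝ) • (Matrix.of fun _ _ => (1 : ℝ))) = Wᵀ * W := by
      ext i j
      rw [hg i j]
      simp only [Matrix.add_apply, Matrix.sub_apply, Matrix.smul_apply, Matrix.one_apply,
        Matrix.of_apply, SimpleGraph.adjMatrix_apply, SimpleGraph.fromRel_adj, smul_eq_mul]
      by_cases hij : i = j
      · subst hij
        have h1 : ⟪v i, v i⟫ = 1 := by
          rw [real_inner_self_eq_norm_mul_norm, hv1 i, mul_one]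
        rw [h1]
        simp only [if_pos rfl, if_true, ne_eq, not_true_eq_false, false_and, if_neg not_false]
        rw [hl]; field_simp; ring
      · rcases hv2 i j hij with h | h
        · have hne : ¬ (i ≠ j ∧ (⟪v i, v j⟫ = -α ∨ ⟪v j, v i⟫ = -α)) := by
            rintro ⟨-, hor | hor⟩
            · rw [h] at hor; linarith
            · rw [real_inner_comm, h] at hor; linarith
          rw [if_neg hij, if_neg hne, h]
          field_simp; ring
        · have hyes : (i ≠ j ∧ (⟪v i, v j⟫ = -α ∨ ⟪v j, v i⟫ = -α)) := ⟨hij, Or.inl h⟩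
          rw [if_neg hij, if_pos hyes, h]
          field_simp; ring
    convert_to (Wᵀ * W).PosSemidef ∧ (Wᵀ * W).rank ≤ d using 3
    rotate_right
    constructor
    · rw [← Matrix.conjTranspose_eq_transpose_of_trivial]
      exact Matrix.posSemidef_conjTranspose_mul_self W
    · rw [Matrix.rank_transpose_mul_self]
      simpa using W.rank_le_card_height
    all_goals convert key
  · rintro ⟨G, hPSD, hrank⟩
    set B : Matrix (Fin N) (Fin N) ℝ := l • (1 : Matrix (Fin N) (Fin N) ℝ) - G.adjMatrix ℝ
      + (1 / 2 : ℝ) • (Matrix.of fun _ _ => (1 : ℝ)) with hBdef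
    obtain ⟨W, hW⟩ := exists_factorization hPSD hrank
    set v : Fin N → EuclideanSpace ℝ (Fin d) := fun i =>
      (WithLp.equiv 2 (Fin d → ℝ)).symm (fun k => Real.sqrt (2 * α) * W k i) with hvdef
    have hent : ∀ i j, ⟪v i, v j⟫ = (2*α) * B i j := by
      intro i j
      rw [inner_eq_sum, hW, Matrix.mul_apply, Finset.mul_sum]
      refine Finset.sum_congr rfl fun k _ => ?_
      simp only [hvdef, Matrix.transpose_apply, WithLp.equiv_symm_apply, WithLp.ofLp_toLp]
      rw [mul_mul_mul_comm, Real.mul_self_sqrt (by positivity : (0:ℝ) ≤ 2*α)]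
    refine ⟨v, ?_, ?_⟩
    · intro i
      have h := hent i i
      simp only [hBdef, Matrix.add_apply, Matrix.sub_apply, Matrix.smul_apply, Matrix.one_apply,
        Matrix.of_apply, SimpleGraph.adjMatrix_apply, smul_eq_mul, if_pos rfl, if_true,
        if_neg (G.irrefl (v := i))] at h
      have h1 : ⟪v i, v i⟫ = 1 := by
        rw [h, hl]; field_simp; ring
      rw [norm_eq_sqrt_real_inner, h1, Real.sqrt_one]
    · intro i j hij
      have h := hent i j
      simp only [hBdef, Matrix.add_apply, Matrix.sub_apply, Matrix.smul_apply, Matrix.one_apply,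
        Matrix.of_apply, SimpleGraph.adjMatrix_apply, smul_eq_mul, if_neg hij] at h
      by_cases hadj : G.Adj i j
      · right
        rw [h, if_pos hadj]; ring
      · left
        rw [h, if_neg hadj]; ring

end
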